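/- Let Φ : (0,∞) → ℝ and suppose there are constants λ₊ ∈ (0,∞) and σ₊ > 1 such that |Φ(r)| ≤ λ₊(1 + r^{σ₊}) for all r > 0. Then there exists a constant j₀ > 0 such that for every E > 0 there exists ε_E > 0 with the following property: for every j ∈ ℤ with |j| ≥ j₀ and every r with 0 < r ≤ ε_E |j|^{1/σ₊}, one has V_j(r) − E ≥ |j|^{2(σ₊−1)/σ₊}. -/

import Mathlib

/-- Interior bound on the effective potential `V_j(r) = (Φ(r) − j)²/r²`:
under the interior growth condition `|Φ(r)| ≤ λ₊(1 + r^{σ₊})` with `σ₊ > 1`,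
there is `j₀ > 0` such that for every `E > 0` there is `ε_E > 0` so that for
all `j ∈ ℤ` with `|j| ≥ j₀` and `0 < r ≤ ε_E |j|^{1/σ₊}` one has
`V_j(r) − E ≥ |j|^{2(σ₊−1)/σ₊}`. -/
theorem effective_potential_interior_bound (Φ : ℝ → ℝ) (lamp σp : ℝ)
    (hlam : 0 < lamp) (hσ : 1 < σp)
    (hΦ : ∀ r > (0 : ℝ), |Φ r| ≤ lamp * (1 + r ^ σp)) :
    ∃ j₀ : ℝ, 0 < j₀ ∧ ∀ E > (0 : ℝ), ∃ ε > (0 : ℝ), ∀ j : ℤ, j₀ ≤ |(j : ℝ)| →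
      ∀ r : ℝ, 0 < r → r ≤ ε * |(j : ℝ)| ^ (1 / σp) →
        |(j : ℝ)| ^ (2 * (σp - 1) / σp) ≤ (Φ r - (j : ℝ)) ^ 2 / r ^ 2 - E := by
  have hσ0 : (0:ℝ) < σp := lt_trans one_pos hσ
  refine ⟨max 1 (4 * lamp), lt_of_lt_of_le one_pos (le_max_left _ _), ?_⟩
  intro E hE
  set ε₀ : ℝ := (2 * Real.sqrt (1 + E))⁻¹ with hε₀def
  have h1E : (0:ℝ) < 1 + E := by linarith
  have hsqrt : (0:ℝ) < Real.sqrt (1 + E) := Real.sqrt_pos.mpr h1E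
  have hε₀ : 0 < ε₀ := by positivity
  set ε₁ : ℝ := (4 * lamp)⁻¹ ^ (1 / σp) with hε₁def
  have hε₁ : 0 < ε₁ := Real.rpow_pos_of_pos (by positivity) _
  refine ⟨min ε₀ ε₁, lt_min hε₀ hε₁, ?_⟩
  intro j hj r hr hrle
  set A : ℝ := |(j : ℝ)| with hA
  have hA1 : (1:ℝ) ≤ A := le_trans (le_max_left _ _) hj
  have hA0 : (0:ℝ) < A := lt_of_lt_of_le one_pos hA1
  have hAlam : 4 * lamp ≤ A := le_trans (le_max_right _ _) hj
  have hApow : (0:ℝ) < A ^ (1 / σp) := Real.rpow_pos_of_pos hA0 _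
  have hr0 : r ≤ ε₀ * A ^ (1 / σp) :=
    le_trans hrle (by gcongr; exact min_le_left _ _)
  have hr1 : r ≤ ε₁ * A ^ (1 / σp) :=
    le_trans hrle (by gcongr; exact min_le_right _ _)
  -- bound on r^σp
  have hrσ : r ^ σp ≤ (4 * lamp)⁻¹ * A := by
    have h1 : r ^ σp ≤ (ε₁ * A ^ (1 / σp)) ^ σp :=
      Real.rpow_le_rpow hr.le hr1 hσ0.le
    have h2 : (ε₁ * A ^ (1 / σp)) ^ σp = (4 * lamp)⁻¹ * A := by
      rw [Real.mul_rpow hε₁.le hApow.le, hε₁def,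
        ← Real.rpow_mul (by positivity : (0:ℝ) ≤ (4 * lamp)⁻¹),
        ← Real.rpow_mul hA0.le, one_div_mul_cancel hσ0.ne',
        Real.rpow_one, Real.rpow_one]
    linarith [h1, h2.le]
  -- bound on |Φ r|
  have hΦr : |Φ r| ≤ A / 2 := by
    have hb := hΦ r hr
    have h3 : lamp * (1 + r ^ σp) ≤ lamp + lamp * ((4 * lamp)⁻¹ * A) := by
      nlinarith
    have h4 : lamp * ((4 * lamp)⁻¹ * A) = A / 4 := by
      field_simp
    linarith
  -- bound on (Φ r - j)^2
  have hsq : (A / 2) ^ 2 ≤ (Φ r - (j:ℝ)) ^ 2 := by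
    have habs : A / 2 ≤ |Φ r - (j:ℝ)| := by
      have h5 : |(j:ℝ)| - |Φ r| ≤ |Φ r - (j:ℝ)| := by
        rw [abs_sub_comm]
        exact abs_sub_abs_le_abs_sub _ _
      rw [← hA] at h5
      linarith
    calc (A / 2) ^ 2 ≤ |Φ r - (j:ℝ)| ^ 2 := by gcongr
      _ = (Φ r - (j:ℝ)) ^ 2 := sq_abs _
  -- bound on r^2
  have hr2 : r ^ 2 ≤ ε₀ ^ 2 * A ^ (2 / σp) := by
    have h6 : r ^ 2 ≤ (ε₀ * A ^ (1 / σp)) ^ 2 := by gcongr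
    have hexp : (1 / σp) * ((2:ℕ):ℝ) = 2 / σp := by push_cast; ring
    have h7 : (ε₀ * A ^ (1 / σp)) ^ 2 = ε₀ ^ 2 * A ^ (2 / σp) := by
      rw [mul_pow, ← Real.rpow_natCast (A ^ (1 / σp)) 2, ← Real.rpow_mul hA0.le, hexp]
    linarith [h6, h7.le]
  have hε₀sq : ε₀ ^ 2 = (4 * (1 + E))⁻¹ := by
    rw [hε₀def, inv_pow, mul_pow, Real.sq_sqrt h1E.le]
    norm_num
  set t : ℝ := 2 * (σp - 1) / σp with ht
  have ht0 : 0 ≤ t := by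
    apply div_nonneg _ hσ0.le; linarith
  have hAt1 : (1:ℝ) ≤ A ^ t := Real.one_le_rpow hA1 ht0
  have hAt0 : (0:ℝ) < A ^ t := lt_of_lt_of_le one_pos hAt1
  have h10 : A ^ t * A ^ (2 / σp) = A ^ 2 := by
    rw [← Real.rpow_add hA0, ht]
    have hexp2 : 2 * (σp - 1) / σp + 2 / σp = 2 := by
      field_simp; ring
    rw [hexp2, ← Real.rpow_natCast A 2]
    norm_num
  -- key: (1+E) * A^t ≤ (Φ r - j)^2 / r^2
  have key : (1 + E) * A ^ t ≤ (Φ r - (j:ℝ)) ^ 2 / r ^ 2 := by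
    rw [le_div_iff₀ (by positivity)]
    have h8 : (1 + E) * A ^ t * r ^ 2 ≤ (1 + E) * A ^ t * (ε₀ ^ 2 * A ^ (2 / σp)) := by
      gcongr
    have h9 : (1 + E) * A ^ t * (ε₀ ^ 2 * A ^ (2 / σp)) = (A / 2) ^ 2 := by
      rw [hε₀sq]
      calc (1 + E) * A ^ t * ((4 * (1 + E))⁻¹ * A ^ (2 / σp))
          = (1 + E) * (4 * (1 + E))⁻¹ * (A ^ t * A ^ (2 / σp)) := by ring
        _ = (1 + E) * (4 * (1 + E))⁻¹ * A ^ 2 := by rw [h10]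
        _ = (A / 2) ^ 2 := by
            field_simp; ring
    calc (1 + E) * A ^ t * r ^ 2 ≤ (A / 2) ^ 2 := by linarith [h8, h9.le]
      _ ≤ (Φ r - (j:ℝ)) ^ 2 := hsq
  have hfin : A ^ t + E ≤ (1 + E) * A ^ t := by nlinarith [hE, hAt1]
  linarith
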